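/- There exist absolute constants δ₀ ∈ (0,1) and C > 0 such that for all 0 < δ ≤ δ₀ the following holds. Let a : (0,∞) → ℝ be continuous with |a(λ)| ≤ δ for all λ > 0, and let w̃ : [1,∞) → (0,∞) be differentiable with w̃(1) = 1 and w̃'(s) = − a(s·w̃(s))·w̃(s) / ( s·( 2 s·w̃(s) + a(s·w̃(s)) ) ) for all s ≥ 1. Then: (i) |w̃(s) − 1| ≤ C δ (s−1)/s for all s ≥ 1; (ii) w̃(s) converges as s → ∞ to a limit w̃_∞ > 0 with |w̃_∞ − 1| ≤ C δ; (iii) |w̃(s) − w̃_∞| ≤ C δ / s for all s ≥ 1; (iv) writing λ(s) := s·w̃(s), for all s > 1 one has |s/λ(s) − 1| ≤ C δ (λ(s) − 1)/λ(s). -/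

import Mathlib

open Filter

/-- Analytic core of Lemma 4.9: estimates and convergence for the ratio
`w̃(s) = w(s)/s` of the luminosity reparametrization to the luminosity
parameter. -/
theorem penrose_luminosity_ratio :
    ∃ δ₀ ∈ Set.Ioo (0:ℝ) 1, ∃ C > (0:ℝ), ∀ δ : ℝ, 0 < δ → δ ≤ δ₀ →
    ∀ a wt : ℝ → ℝ,
      ContinuousOn a (Set.Ioi 0) → (∀ l > (0:ℝ), |a l| ≤ δ) →
      (∀ s ≥ (1:ℝ), 0 < wt s) → wt 1 = 1 →
      (∀ s ≥ (1:ℝ), HasDerivAt wt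
        (-(a (s * wt s) * wt s) / (s * (2 * s * wt s + a (s * wt s)))) s) →
      ((∀ s ≥ (1:ℝ), |wt s - 1| ≤ C * δ * (s - 1) / s) ∧
        (∀ s > (1:ℝ), |s / (s * wt s) - 1| ≤ C * δ * (s * wt s - 1) / (s * wt s)) ∧
        ∃ wInf : ℝ, 0 < wInf ∧ |wInf - 1| ≤ C * δ ∧
          Tendsto wt atTop (nhds wInf) ∧
          (∀ s ≥ (1:ℝ), |wt s - wInf| ≤ C * δ / s)) := by
  refine ⟨1/8, ⟨by norm_num, by norm_num⟩, 6, by norm_num, ?_⟩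
  intro δ hδ hδ8 a wt _hacont habd hwt_pos hwt1 hode
  set W : ℝ → ℝ := fun s => -(a (s * wt s) * wt s) / (s * (2 * s * wt s + a (s * wt s)))
    with hWdef
  have hode' : ∀ s ≥ (1:ℝ), HasDerivAt wt (W s) s := hode
  -- key pointwise derivative bound, conditional on `wt` staying near `1`
  have key : ∀ x ≥ (1:ℝ), |wt x - 1| ≤ 1/2 → |W x| ≤ 2*δ/x^2 := by
    intro x hx hb
    have hx0 : (0:ℝ) < x := by linarith
    have hwt : 0 < wt x := hwt_pos x hx
    have hl : 0 < x * wt x := by positivity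
    have ha' := habd _ hl
    obtain ⟨halb, haub⟩ := abs_le.1 ha'
    obtain ⟨hb1, hb2⟩ := abs_le.1 hb
    have hden : (7/8) * x^2 ≤ x * (2 * x * wt x + a (x * wt x)) := by nlinarith
    have hdenpos : 0 < x * (2 * x * wt x + a (x * wt x)) := by nlinarith
    have hnum : |(-(a (x * wt x) * wt x))| ≤ δ * (3/2) := by
      rw [abs_neg, abs_mul, abs_of_pos hwt]
      exact mul_le_mul ha' (by linarith) hwt.le hδ.le
    show |(-(a (x * wt x) * wt x)) / (x * (2 * x * wt x + a (x * wt x)))| ≤ 2*δ/x^2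
    rw [abs_div, abs_of_pos hdenpos, div_le_div_iff₀ hdenpos (by positivity)]
    nlinarith [mul_le_mul_of_nonneg_right hnum (sq_nonneg x),
      mul_le_mul_of_nonneg_left hden (by positivity : (0:ℝ) ≤ 2*δ)]
  -- the fundamental a priori estimate, via a Grönwall-type fencing theorem
  have hBd : ∀ x : ℝ, 0 < x → HasDerivAt (fun y => 3*δ*(y-1)/y) (3*δ/x^2) x := by
    intro x hx0
    have h1 : HasDerivAt (fun y : ℝ => 3*δ*(y-1)) (3*δ*1) x :=
      ((hasDerivAt_id x).sub_const 1).const_mul (3*δ)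
    have h2 := h1.div (hasDerivAt_id x) hx0.ne'
    refine h2.congr_deriv ?_
    simp only [id]
    ring
  have hi : ∀ s ≥ (1:ℝ), |wt s - 1| ≤ 3*δ*(s-1)/s := by
    intro s hs
    have := image_norm_le_of_norm_deriv_right_lt_deriv_boundary'
      (f := fun x => wt x - 1) (f' := W) (a := 1) (b := s)
      (B := fun x => 3*δ*(x-1)/x) (B' := fun x => 3*δ/x^2)
      (fun x hx => (((hode' x hx.1).sub_const 1).continuousAt).continuousWithinAt)
      (fun x hx => ((hode' x hx.1).sub_const 1).hasDerivWithinAt)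
      (by simp [hwt1])
      (fun x hx => ((hBd x (lt_of_lt_of_le one_pos hx.1)).continuousAt).continuousWithinAt)
      (fun x hx => (hBd x (lt_of_lt_of_le one_pos hx.1)).hasDerivWithinAt)
      ?_ (Set.right_mem_Icc.2 hs)
    · simpa [Real.norm_eq_abs] using this
    · intro x hx heq
      have hx1 : (1:ℝ) ≤ x := hx.1
      have hx0 : (0:ℝ) < x := by linarith
      rw [Real.norm_eq_abs] at heq ⊢
      have hfrac : (x-1)/x ≤ 1 := by rw [div_le_one hx0]; linarith
      have hble : |wt x - 1| ≤ 1/2 := by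
        have heq' : |wt x - 1| = 3*δ*(x-1)/x := heq
        rw [heq', mul_div_assoc]
        nlinarith
      have := key x hx1 hble
      have h23 : 2*δ/x^2 < 3*δ/x^2 :=
        (div_lt_div_iff_of_pos_right (by positivity)).2 (by linarith)
      exact lt_of_le_of_lt this h23
  -- global bound `|wt - 1| ≤ 1/2` and global derivative bound
  have hb2 : ∀ x ≥ (1:ℝ), |wt x - 1| ≤ 1/2 := by
    intro x hx
    have hx0 : (0:ℝ) < x := by linarith
    have hfrac : (x-1)/x ≤ 1 := by rw [div_le_one hx0]; linarith
    calc |wt x - 1| ≤ 3*δ*(x-1)/x := hi x hx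
      _ = 3*δ*((x-1)/x) := by rw [mul_div_assoc]
      _ ≤ 1/2 := by nlinarith
  have hW : ∀ x ≥ (1:ℝ), |W x| ≤ 2*δ/x^2 := fun x hx => key x hx (hb2 x hx)
  -- monotone / antitone auxiliary functions
  have hderiv : ∀ (c : ℝ) (x : ℝ), 1 ≤ x → HasDerivAt (fun y => wt y + c * y⁻¹)
      (W x + c * (-(x^2)⁻¹)) x := by
    intro c x hx
    exact (hode' x hx).add ((hasDerivAt_inv (by positivity : (0:ℝ) < x).ne').const_mul c)
  have hcont : ∀ (c : ℝ), ContinuousOn (fun y => wt y + c * y⁻¹) (Set.Ici (1:ℝ)) :=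
    fun c => fun x hx => ((hderiv c x hx).continuousAt).continuousWithinAt
  have hioi : interior (Set.Ici (1:ℝ)) = Set.Ioi 1 := interior_Ici
  have hmono : MonotoneOn (fun y => wt y + (-(3*δ)) * y⁻¹) (Set.Ici (1:ℝ)) := by
    apply monotoneOn_of_hasDerivWithinAt_nonneg (convex_Ici 1) (hcont _)
      (f' := fun x => W x + (-(3*δ)) * (-(x^2)⁻¹))
    · intro x hx
      rw [hioi] at hx
      exact ((hderiv _ x (le_of_lt hx)).hasDerivWithinAt)
    · intro x hx
      rw [hioi] at hx
      have hx1 : (1:ℝ) ≤ x := hx.le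
      have h := (abs_le.1 (hW x hx1)).1
      have hx2 : (0:ℝ) < x^2 := by positivity
      have h3 : 2*δ/x^2 ≤ 3*δ*(x^2)⁻¹ := by
        rw [div_eq_mul_inv]
        have : (0:ℝ) < (x^2)⁻¹ := by positivity
        nlinarith
      nlinarith [h3]
  have hanti : AntitoneOn (fun y => wt y + (3*δ) * y⁻¹) (Set.Ici (1:ℝ)) := by
    apply antitoneOn_of_hasDerivWithinAt_nonpos (convex_Ici 1) (hcont _)
      (f' := fun x => W x + (3*δ) * (-(x^2)⁻¹))
    · intro x hx
      rw [hioi] at hx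
      exact ((hderiv _ x (le_of_lt hx)).hasDerivWithinAt)
    · intro x hx
      rw [hioi] at hx
      have hx1 : (1:ℝ) ≤ x := hx.le
      have h := (abs_le.1 (hW x hx1)).2
      have hx2 : (0:ℝ) < x^2 := by positivity
      have h3 : 2*δ/x^2 ≤ 3*δ*(x^2)⁻¹ := by
        rw [div_eq_mul_inv]
        have : (0:ℝ) < (x^2)⁻¹ := by positivity
        nlinarith
      nlinarith [h3]
  -- two-sided Cauchy estimate
  have hcau : ∀ s t : ℝ, 1 ≤ s → s ≤ t → |wt t - wt s| ≤ 3*δ*s⁻¹ := by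
    intro s t hs hst
    have ht : (1:ℝ) ≤ t := le_trans hs hst
    have h1 := hmono (Set.mem_Ici.2 hs) (Set.mem_Ici.2 ht) hst
    have h2 := hanti (Set.mem_Ici.2 hs) (Set.mem_Ici.2 ht) hst
    simp only at h1 h2
    have hs0 : (0:ℝ) < s := by linarith
    have hinv : t⁻¹ ≤ s⁻¹ := inv_anti₀ hs0 hst
    have hinv0 : (0:ℝ) ≤ t⁻¹ := by positivity
    rw [abs_le]
    constructor <;> nlinarith
  -- the monotone extension and its limit
  set m : ℝ → ℝ := fun x => wt (max 1 x) + (-(3*δ)) * (max 1 x)⁻¹ with hm_def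
  have hm_mono : Monotone m := fun x y hxy =>
    hmono (Set.mem_Ici.2 (le_max_left 1 x)) (Set.mem_Ici.2 (le_max_left 1 y))
      (max_le_max le_rfl hxy)
  have hm_bdd : BddAbove (Set.range m) := by
    refine ⟨3/2, ?_⟩
    rintro z ⟨x, rfl⟩
    have hx1 : (1:ℝ) ≤ max 1 x := le_max_left 1 x
    have := (abs_le.1 (hb2 _ hx1)).2
    have hpos : (0:ℝ) < (max 1 x)⁻¹ := by positivity
    simp only [hm_def]
    nlinarith
  have hm_lim := tendsto_atTop_ciSup hm_mono hm_bdd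
  set L := ⨆ i, m i with hL
  have h0 : Tendsto (fun x : ℝ => (-(3*δ)) * (max 1 x)⁻¹) atTop (nhds 0) := by
    have h1 : Tendsto (fun x : ℝ => max 1 x) atTop atTop :=
      tendsto_atTop_mono (fun x => le_max_right 1 x) tendsto_id
    have h2 : Tendsto (fun x : ℝ => (max 1 x)⁻¹) atTop (nhds 0) :=
      Tendsto.inv_tendsto_atTop h1
    simpa using h2.const_mul (-(3*δ))
  have hlim : Tendsto wt atTop (nhds L) := by
    have h3 : Tendsto (fun x => m x + (-(-(3*δ)) * (max 1 x)⁻¹)) atTop (nhds (L + 0)) := by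
      apply hm_lim.add
      simpa using h0.neg
    rw [add_zero] at h3
    apply h3.congr'
    filter_upwards [eventually_ge_atTop (1:ℝ)] with x hx
    simp only [hm_def, max_eq_right hx]
    ring
  have hiv : ∀ s ≥ (1:ℝ), |wt s - L| ≤ 3*δ/s := by
    intro s hs
    have htend : Tendsto (fun t => |wt s - wt t|) atTop (nhds |wt s - L|) :=
      (tendsto_const_nhds.sub hlim).abs
    apply le_of_tendsto htend
    filter_upwards [eventually_ge_atTop s] with t ht
    rw [abs_sub_comm, div_eq_mul_inv]
    exact hcau s t hs ht
  have h1L : |L - 1| ≤ 3*δ := by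
    have := hiv 1 le_rfl
    rwa [hwt1, div_one, abs_sub_comm] at this
  -- final assembly with `C = 6`
  refine ⟨?_, ?_, L, ?_, ?_, hlim, ?_⟩
  · -- (i)
    intro s hs
    have hs0 : (0:ℝ) < s := by linarith
    have hfrac : (0:ℝ) ≤ (s-1)/s := div_nonneg (by linarith) hs0.le
    calc |wt s - 1| ≤ 3*δ*(s-1)/s := hi s hs
      _ = 3*δ*((s-1)/s) := by rw [mul_div_assoc]
      _ ≤ 6*δ*((s-1)/s) := by nlinarith
      _ = 6*δ*(s-1)/s := by rw [mul_div_assoc]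
  · -- (iv)
    intro s hs
    have hs1 : (1:ℝ) ≤ s := hs.le
    have hs0 : (0:ℝ) < s := by linarith
    have hv := hi s hs1
    have hvpos := hwt_pos s hs1
    have hv12 : (1:ℝ)/2 ≤ wt s := by
      have := (abs_le.1 (hb2 s hs1)).1
      linarith
    have hsv : (0:ℝ) < s * wt s := by positivity
    have hkey : s * (3*δ*(s-1)/s) = 3*δ*(s-1) := by field_simp
    have hv1 := (abs_le.1 hv).1
    have hlam : (5/8)*(s-1) ≤ s * wt s - 1 := by nlinarith
    have hrw : s / (s * wt s) = (wt s)⁻¹ := by field_simp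
    rw [hrw]
    have hrw2 : (wt s)⁻¹ - 1 = (1 - wt s)/(wt s) := by field_simp
    rw [hrw2, abs_div, abs_of_pos hvpos, abs_sub_comm, div_le_div_iff₀ hvpos hsv]
    have hvabs := abs_le.1 hv
    have h6 : 3*δ*(s-1) ≤ 6*δ*(s * wt s - 1) := by nlinarith
    calc |wt s - 1| * (s * wt s) ≤ (3*δ*(s-1)/s) * (s * wt s) := by
          apply mul_le_mul_of_nonneg_right hv hsv.le
      _ = 3*δ*(s-1) * wt s := by field_simp
      _ ≤ 6*δ*(s * wt s - 1) * wt s := mul_le_mul_of_nonneg_right h6 hvpos.le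
      _ = 6*δ*(s * wt s - 1) * wt s := rfl
  · -- positivity of wInf
    have := (abs_le.1 h1L).1
    linarith
  · -- (ii)
    calc |L - 1| ≤ 3*δ := h1L
      _ ≤ 6*δ := by linarith
  · -- (iii)
    intro s hs
    have hs0 : (0:ℝ) < s := by linarith
    calc |wt s - L| ≤ 3*δ/s := hiv s hs
      _ ≤ 6*δ/s := (div_le_div_iff_of_pos_right hs0).2 (by linarith)
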